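/- Let β, β', γ ∈ ℂ with Re β > 0, Re β' > 0 and Re(γ − β − β') > 0. Then for all x, y ∈ ℂ, Horn's confluent series Φ_2(β, β'; γ; x, y) = Σ_{m=0}^∞ Σ_{n=0}^∞ [(β)_m (β')_n / ((γ)_{m+n} m! n!)] x^m y^n converges absolutely and equals [Γ(γ)/(Γ(β)Γ(β')Γ(γ−β−β'))] · ∫_{Δ_2} s^{β−1} t^{β'−1} (1−s−t)^{γ−β−β'−1} e^{sx+ty} ds dt, the integral being absolutely convergent. -/

import Mathlib

open MeasureTheory Complex Set

noncomputable section

/-- The Pochhammer symbol `(a)ₖ = a(a+1)⋯(a+k-1)`. -/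
def poch (a : ℂ) (k : ℕ) : ℂ := ∏ i ∈ Finset.range k, (a + i)

/-- The open two-dimensional simplex `{(s,t) : s > 0, t > 0, s + t < 1}`. -/
def openSimplex2 : Set (ℝ × ℝ) := {p | 0 < p.1 ∧ 0 < p.2 ∧ p.1 + p.2 < 1}

namespace Phi2Aux

def pochR (a : ℝ) (k : ℕ) : ℝ := ∏ i ∈ Finset.range k, (a + i)

lemma pochR_nonneg {a : ℝ} (ha : 0 ≤ a) (k : ℕ) : 0 ≤ pochR a k :=
  Finset.prod_nonneg fun i _ => by positivity

lemma pochR_pos {a : ℝ} (ha : 0 < a) (k : ℕ) : 0 < pochR a k :=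
  Finset.prod_pos fun i _ => by positivity

lemma norm_poch_le (a : ℂ) (k : ℕ) : ‖poch a k‖ ≤ pochR ‖a‖ k := by
  rw [poch, pochR, norm_prod]
  refine Finset.prod_le_prod (fun i _ => norm_nonneg _) (fun i _ => ?_)
  calc ‖a + (i:ℂ)‖ ≤ ‖a‖ + ‖(i:ℂ)‖ := norm_add_le _ _
  _ = ‖a‖ + i := by rw [Complex.norm_natCast]

lemma pochR_re_le_norm_poch {a : ℂ} (ha : 0 ≤ a.re) (k : ℕ) : pochR a.re k ≤ ‖poch a k‖ := by
  rw [poch, pochR, norm_prod]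
  refine Finset.prod_le_prod (fun i _ => by positivity) (fun i _ => ?_)
  calc a.re + (i:ℝ) = (a + (i:ℂ)).re := by simp
  _ ≤ ‖a + (i:ℂ)‖ := Complex.re_le_norm _

lemma pochR_le {a : ℝ} (ha : 0 ≤ a) (k : ℕ) : pochR a k ≤ (a+1)^k * k.factorial := by
  rw [pochR, ← Finset.prod_range_add_one_eq_factorial]
  push_cast
  calc ∏ i ∈ Finset.range k, (a + (i:ℝ))
      ≤ ∏ i ∈ Finset.range k, ((a+1) * ((i:ℝ)+1)) := by
        refine Finset.prod_le_prod (fun i _ => by positivity)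
          (fun i _ => by nlinarith [Nat.cast_nonneg (α := ℝ) i])
  _ = (a+1)^k * ∏ i ∈ Finset.range k, ((i:ℝ)+1) := by
        rw [Finset.prod_mul_distrib, Finset.prod_const, Finset.card_range]

lemma le_pochR {c : ℝ} (hc : 0 < c) (k : ℕ) : (min c 1)^k * k.factorial ≤ pochR c k := by
  rw [pochR, ← Finset.prod_range_add_one_eq_factorial]
  push_cast
  have h1 : min c 1 ≤ c := min_le_left _ _
  have h2 : min c 1 ≤ 1 := min_le_right _ _
  have h0 : 0 < min c 1 := lt_min hc one_pos
  calc (min c 1)^k * ∏ i ∈ Finset.range k, ((i:ℝ)+1)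
      = ∏ i ∈ Finset.range k, (min c 1 * ((i:ℝ)+1)) := by
        rw [Finset.prod_mul_distrib, Finset.prod_const, Finset.card_range]
  _ ≤ ∏ i ∈ Finset.range k, (c + (i:ℝ)) := by
        refine Finset.prod_le_prod (fun i _ => by positivity)
          (fun i _ => by nlinarith [Nat.cast_nonneg (α := ℝ) i])

lemma master_nonneg {a b c A B : ℝ} (ha : 0 ≤ a) (hb : 0 ≤ b) (hc : 0 < c)
    (hA : 0 ≤ A) (hB : 0 ≤ B) (p : ℕ × ℕ) :
    0 ≤ pochR a p.1 * pochR b p.2 /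
      (pochR c (p.1 + p.2) * p.1.factorial * p.2.factorial) * A ^ p.1 * B ^ p.2 := by
  refine mul_nonneg (mul_nonneg (div_nonneg
    (mul_nonneg (pochR_nonneg ha _) (pochR_nonneg hb _)) ?_) (pow_nonneg hA _)) (pow_nonneg hB _)
  have := (pochR_pos hc (p.1+p.2)).le
  positivity

lemma summable_master {a b c A B : ℝ} (ha : 0 ≤ a) (hb : 0 ≤ b) (hc : 0 < c)
    (hA : 0 ≤ A) (hB : 0 ≤ B) :
    Summable (fun p : ℕ × ℕ => pochR a p.1 * pochR b p.2 /
      (pochR c (p.1 + p.2) * p.1.factorial * p.2.factorial) * A ^ p.1 * B ^ p.2) := by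
  set c' := min c 1 with hc'
  have hc'0 : 0 < c' := lt_min hc one_pos
  have hf : Summable (fun m : ℕ => ((a+1)*A/c')^m / m.factorial) :=
    Real.summable_pow_div_factorial _
  have hg : Summable (fun n : ℕ => ((b+1)*B/c')^n / n.factorial) :=
    Real.summable_pow_div_factorial _
  refine Summable.of_nonneg_of_le (master_nonneg ha hb hc hA hB) (fun p => ?_)
    (hf.mul_of_nonneg hg (fun m => by positivity) (fun n => by positivity))
  obtain ⟨m, n⟩ := p
  simp only
  have hfacm : (0:ℝ) < m.factorial := by exact_mod_cast m.factorial_pos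
  have hfacn : (0:ℝ) < n.factorial := by exact_mod_cast n.factorial_pos
  have hfacmn : (0:ℝ) < (m+n).factorial := by exact_mod_cast (m+n).factorial_pos
  have hP : pochR a m * pochR b n ≤ (a+1)^m * m.factorial * ((b+1)^n * n.factorial) :=
    mul_le_mul (pochR_le ha m) (pochR_le hb n) (pochR_nonneg hb n) (by positivity)
  have step1 : pochR a m * pochR b n / (pochR c (m + n) * m.factorial * n.factorial) * A ^ m * B ^ n
      ≤ ((a+1)^m * m.factorial * ((b+1)^n * n.factorial)) * (A ^ m * B ^ n) /
        (c'^(m+n) * (m+n).factorial * m.factorial * n.factorial) := by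
    rw [div_mul_eq_mul_div, div_mul_eq_mul_div, mul_assoc (pochR a m * pochR b n)]
    refine div_le_div₀ (by positivity) (mul_le_mul_of_nonneg_right hP (by positivity))
      (by positivity) ?_
    have := le_pochR hc (m+n)
    gcongr
  refine step1.trans ?_
  have e2 : ((a+1)*A/c')^m / m.factorial * (((b+1)*B/c')^n / n.factorial)
      = ((a+1)^m * m.factorial * ((b+1)^n * n.factorial)) * (A ^ m * B ^ n) /
        (c'^(m+n) * (m.factorial * n.factorial) * m.factorial * n.factorial) := by
    rw [div_pow, div_pow, mul_pow, mul_pow, pow_add]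
    field_simp
  rw [e2]
  refine div_le_div_of_nonneg_left (by positivity) (by positivity) ?_
  have hfac : (m.factorial : ℝ) * n.factorial ≤ (m+n).factorial := by
    exact_mod_cast Nat.le_of_dvd (m+n).factorial_pos (Nat.factorial_mul_factorial_dvd_factorial_add m n)
  gcongr


lemma poch_succ (a : ℂ) (k : ℕ) : poch a (k+1) = poch a k * (a + k) := by
  rw [poch, poch, Finset.prod_range_succ]

lemma pochR_succ (a : ℝ) (k : ℕ) : pochR a (k+1) = pochR a k * (a + k) := by
  rw [pochR, pochR, Finset.prod_range_succ]

lemma Gamma_add_nat {a : ℂ} (ha : 0 < a.re) (k : ℕ) :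
    Complex.Gamma (a + k) = Complex.Gamma a * poch a k := by
  induction k with
  | zero => simp [poch]
  | succ k ih =>
    have hne : a + k ≠ 0 := by
      intro h
      have : (a + (k:ℂ)).re = 0 := by rw [h]; simp
      simp only [Complex.add_re, Complex.natCast_re] at this
      have : (0:ℝ) ≤ (k:ℝ) := Nat.cast_nonneg k
      linarith
    have : a + ((k:ℕ)+1:ℕ) = (a + k) + 1 := by push_cast; ring
    rw [this, Complex.Gamma_add_one _ hne, ih, poch_succ]
    ring

lemma GammaR_add_nat {a : ℝ} (ha : 0 < a) (k : ℕ) :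
    Real.Gamma (a + k) = Real.Gamma a * pochR a k := by
  induction k with
  | zero => simp [pochR]
  | succ k ih =>
    have hne : a + (k:ℝ) ≠ 0 := by positivity
    have : a + ((k:ℕ)+1:ℕ) = (a + (k:ℝ)) + 1 := by push_cast; ring
    rw [this, Real.Gamma_add_one hne, ih, pochR_succ]
    ring

lemma poch_ne_zero {a : ℂ} (ha : 0 < a.re) (k : ℕ) : poch a k ≠ 0 := by
  have h := pochR_re_le_norm_poch ha.le k
  have h2 := pochR_pos ha k
  intro h0
  rw [h0, norm_zero] at h
  linarith

/-! ### One-dimensional scaled beta integrals -/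

lemma cIntegrableOn_scaled {v w : ℂ} (hv : 0 < v.re) (hw : 0 < w.re) {c : ℝ} (hc : 0 < c) :
    IntegrableOn (fun t : ℝ => (t : ℂ) ^ (v - 1) * (((c - t : ℝ)) : ℂ) ^ (w - 1)) (Ioo 0 c) := by
  have hbase : IntervalIntegrable
      (fun x : ℝ => (x : ℂ) ^ (v - 1) * (1 - (x : ℂ)) ^ (w - 1)) volume 0 1 :=
    Complex.betaIntegral_convergent hv hw
  have hcomp := hbase.comp_mul_left (c := c⁻¹)
  simp only [zero_div, one_div, inv_inv] at hcomp
  have hInt : IntegrableOn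
      (fun x : ℝ => ((c⁻¹ * x : ℝ) : ℂ) ^ (v - 1) * (1 - ((c⁻¹ * x : ℝ) : ℂ)) ^ (w - 1))
      (Ioo 0 c) := by
    have := (intervalIntegrable_iff_integrableOn_Ioc_of_le hc.le).mp hcomp
    rwa [integrableOn_Ioc_iff_integrableOn_Ioo] at this
  have hK : IntegrableOn
      (fun x : ℝ => ((c:ℂ)^(v-1) * (c:ℂ)^(w-1)) *
        (((c⁻¹ * x : ℝ) : ℂ) ^ (v - 1) * (1 - ((c⁻¹ * x : ℝ) : ℂ)) ^ (w - 1)))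
      (Ioo 0 c) := hInt.const_mul _
  refine hK.congr_fun (fun t ht => ?_) measurableSet_Ioo
  obtain ⟨ht0, htc⟩ := ht
  have hctpos : (0:ℝ) < c - t := by linarith
  have e1 : ((c⁻¹ * t : ℝ) : ℂ) ^ (v - 1) = ((c⁻¹:ℝ):ℂ)^(v-1) * (t:ℂ)^(v-1) := by
    rw [ofReal_mul]; exact mul_cpow_ofReal_nonneg (inv_nonneg.2 hc.le) ht0.le _
  have hcne : (c:ℂ) ≠ 0 := ofReal_ne_zero.2 hc.ne'
  have e2 : (1 - ((c⁻¹ * t : ℝ) : ℂ)) = ((c⁻¹ * (c - t) : ℝ) : ℂ) := by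
    push_cast
    field_simp
  have e3 : ((c⁻¹ * (c - t) : ℝ) : ℂ) ^ (w - 1)
      = ((c⁻¹:ℝ):ℂ)^(w-1) * (((c - t : ℝ)):ℂ)^(w-1) := by
    rw [ofReal_mul]; exact mul_cpow_ofReal_nonneg (inv_nonneg.2 hc.le) hctpos.le _
  have e4 : (c:ℂ)^(v-1) * ((c⁻¹:ℝ):ℂ)^(v-1) = 1 := by
    rw [← mul_cpow_ofReal_nonneg hc.le (inv_nonneg.2 hc.le), ← ofReal_mul,
      mul_inv_cancel₀ hc.ne', ofReal_one, one_cpow]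
  have e5 : (c:ℂ)^(w-1) * ((c⁻¹:ℝ):ℂ)^(w-1) = 1 := by
    rw [← mul_cpow_ofReal_nonneg hc.le (inv_nonneg.2 hc.le), ← ofReal_mul,
      mul_inv_cancel₀ hc.ne', ofReal_one, one_cpow]
  calc (c:ℂ)^(v-1) * (c:ℂ)^(w-1) *
      (((c⁻¹ * t : ℝ) : ℂ) ^ (v - 1) * (1 - ((c⁻¹ * t : ℝ) : ℂ)) ^ (w - 1))
      = ((c:ℂ)^(v-1) * ((c⁻¹:ℝ):ℂ)^(v-1)) * ((c:ℂ)^(w-1) * ((c⁻¹:ℝ):ℂ)^(w-1)) *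
        ((t:ℂ)^(v-1) * (((c - t : ℝ)):ℂ)^(w-1)) := by rw [e1, e2, e3]; ring
  _ = (t:ℂ)^(v-1) * (((c - t : ℝ)):ℂ)^(w-1) := by rw [e4, e5]; ring

lemma cIntegral_scaled {v w : ℂ} (hv : 0 < v.re) (hw : 0 < w.re) {c : ℝ} (hc : 0 < c) :
    ∫ t in Ioo 0 c, (t : ℂ) ^ (v - 1) * (((c - t : ℝ)) : ℂ) ^ (w - 1)
      = (c:ℂ) ^ (v + w - 1) * Complex.betaIntegral v w := by
  have hfun : (fun t : ℝ => (t : ℂ) ^ (v - 1) * (((c - t : ℝ)) : ℂ) ^ (w - 1))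
      = fun t : ℝ => (t : ℂ) ^ (v - 1) * ((c : ℂ) - t) ^ (w - 1) := by
    funext t; rw [ofReal_sub]
  rw [hfun, ← integral_Ioc_eq_integral_Ioo, ← intervalIntegral.integral_of_le hc.le,
    Complex.betaIntegral_scaled v w hc]

def Br (a b : ℝ) : ℝ := ∫ x in Ioo (0:ℝ) 1, x ^ (a-1) * (1-x) ^ (b-1)

lemma ofReal_scaled {a b t c : ℝ} (ht0 : 0 < t) (htc : t < c) :
    ((t^(a-1) * (c-t)^(b-1) : ℝ) : ℂ)
      = (t:ℂ)^((a:ℂ)-1) * ((c - t : ℝ):ℂ)^((b:ℂ)-1) := by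
  rw [ofReal_mul, Complex.ofReal_cpow ht0.le, Complex.ofReal_cpow (by linarith : (0:ℝ) ≤ c - t)]
  push_cast
  ring

lemma rIntegrableOn_scaled {a b : ℝ} (ha : 0 < a) (hb : 0 < b) {c : ℝ} (hc : 0 < c) :
    IntegrableOn (fun t : ℝ => t^(a-1) * (c-t)^(b-1)) (Ioo 0 c) := by
  have h := cIntegrableOn_scaled (v := (a:ℂ)) (w := (b:ℂ)) (by simpa using ha) (by simpa using hb) hc
  have h2 : IntegrableOn (fun t : ℝ => ((t^(a-1) * (c-t)^(b-1) : ℝ) : ℂ)) (Ioo 0 c) :=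
    h.congr_fun (fun t ht => (ofReal_scaled ht.1 ht.2).symm) measurableSet_Ioo
  have h3 := h2.re
  simpa [RCLike.re_to_complex, IntegrableOn] using h3

lemma betaIntegral_ofReal {a b : ℝ} (ha : 0 < a) (hb : 0 < b) :
    Complex.betaIntegral (a:ℂ) (b:ℂ) = ((Br a b : ℝ) : ℂ) := by
  rw [Complex.betaIntegral, intervalIntegral.integral_of_le zero_le_one,
    integral_Ioc_eq_integral_Ioo, Br]
  calc ∫ t in Ioo (0:ℝ) 1, (t:ℂ) ^ ((a:ℂ) - 1) * (1 - (t:ℂ)) ^ ((b:ℂ) - 1)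
      = ∫ t in Ioo (0:ℝ) 1, ((t^(a-1) * (1-t)^(b-1) : ℝ) : ℂ) := by
        refine setIntegral_congr_fun measurableSet_Ioo (fun t ht => ?_)
        rw [ofReal_scaled ht.1 ht.2, ofReal_sub, ofReal_one]
  _ = ((∫ t in Ioo (0:ℝ) 1, t^(a-1) * (1-t)^(b-1) : ℝ) : ℂ) := integral_ofReal
  
lemma rIntegral_scaled {a b : ℝ} (ha : 0 < a) (hb : 0 < b) {c : ℝ} (hc : 0 < c) :
    ∫ t in Ioo 0 c, t^(a-1) * (c-t)^(b-1) = c^(a+b-1) * Br a b := by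
  apply Complex.ofReal_injective
  calc ((∫ t in Ioo 0 c, t^(a-1) * (c-t)^(b-1) : ℝ) : ℂ)
      = ∫ t in Ioo 0 c, ((t^(a-1) * (c-t)^(b-1) : ℝ) : ℂ) := integral_ofReal.symm
  _ = ∫ t in Ioo 0 c, (t:ℂ)^((a:ℂ)-1) * ((c - t : ℝ):ℂ)^((b:ℂ)-1) :=
      setIntegral_congr_fun measurableSet_Ioo (fun t ht => ofReal_scaled ht.1 ht.2)
  _ = (c:ℂ) ^ ((a:ℂ) + (b:ℂ) - 1) * Complex.betaIntegral (a:ℂ) (b:ℂ) := by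
      exact cIntegral_scaled (by simpa using ha) (by simpa using hb) hc
  _ = ((c^(a+b-1) * Br a b : ℝ) : ℂ) := by
      rw [betaIntegral_ofReal ha hb,
        show ((a:ℂ) + (b:ℂ) - 1) = ((a + b - 1 : ℝ) : ℂ) by push_cast; ring,
        ← Complex.ofReal_cpow hc.le, ← ofReal_mul]


/-! ### The two-dimensional Dirichlet integral -/

def dint (u v w : ℂ) : ℝ × ℝ → ℂ := fun p =>
  (p.1:ℂ)^(u-1) * (p.2:ℂ)^(v-1) * ((1-p.1-p.2:ℝ):ℂ)^(w-1)

lemma isOpen_openSimplex2 : IsOpen openSimplex2 := by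
  have : openSimplex2 = ({p : ℝ × ℝ | 0 < p.1} ∩ {p | 0 < p.2}) ∩ {p | p.1 + p.2 < 1} := by
    ext p; simp [openSimplex2, and_assoc]
  rw [this]
  exact ((isOpen_lt continuous_const continuous_fst).inter
    (isOpen_lt continuous_const continuous_snd)).inter
    (isOpen_lt (continuous_fst.add continuous_snd) continuous_const)

lemma measurableSet_openSimplex2 : MeasurableSet openSimplex2 :=
  isOpen_openSimplex2.measurableSet

lemma continuousOn_dint (u v w : ℂ) : ContinuousOn (dint u v w) openSimplex2 := by
  refine ContinuousOn.mul (ContinuousOn.mul ?_ ?_) ?_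
  · refine ContinuousOn.cpow_const ?_ (fun p hp => ?_)
    · exact (Complex.continuous_ofReal.comp continuous_fst).continuousOn
    · exact Complex.ofReal_mem_slitPlane.2 hp.1
  · refine ContinuousOn.cpow_const ?_ (fun p hp => ?_)
    · exact (Complex.continuous_ofReal.comp continuous_snd).continuousOn
    · exact Complex.ofReal_mem_slitPlane.2 hp.2.1
  · refine ContinuousOn.cpow_const ?_ (fun p hp => ?_)
    · exact (Complex.continuous_ofReal.comp
        ((continuous_const.sub continuous_fst).sub continuous_snd)).continuousOn
    · exact Complex.ofReal_mem_slitPlane.2 (by obtain ⟨h1, h2, h3⟩ := hp; linarith)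

lemma slice_eq (u v w : ℂ) {s : ℝ} (hs : s ∈ Ioo (0:ℝ) 1) :
    (fun t => openSimplex2.indicator (dint u v w) (s, t))
      = (Ioo (0:ℝ) (1-s)).indicator
          (fun t => (s:ℂ)^(u-1) * ((t:ℂ)^(v-1) * (((1-s) - t : ℝ):ℂ)^(w-1))) := by
  funext t
  by_cases h : t ∈ Ioo (0:ℝ) (1-s)
  · rw [indicator_of_mem h, indicator_of_mem
      (show (s,t) ∈ openSimplex2 from ⟨hs.1, h.1, by have := h.2; simp only; linarith⟩)]
    show (s:ℂ)^(u-1) * (t:ℂ)^(v-1) * ((1-s-t:ℝ):ℂ)^(w-1) = _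
    rw [show (1-s-t : ℝ) = (1-s) - t by ring, mul_assoc]
  · rw [indicator_of_notMem h, indicator_of_notMem]
    rintro ⟨h1, h2, h3⟩
    exact h ⟨h2, by simp only at h3 ⊢; linarith⟩

lemma slice_zero (u v w : ℂ) {s : ℝ} (hs : s ∉ Ioo (0:ℝ) 1) (t : ℝ) :
    openSimplex2.indicator (dint u v w) (s, t) = 0 := by
  refine indicator_of_notMem (fun hmem => hs ?_) _
  obtain ⟨h1, h2, h3⟩ := hmem
  exact ⟨h1, by simp only at h1 h2 h3 ⊢; linarith⟩

lemma norm_dint_slice {u v w : ℂ} {s t : ℝ} (hs : 0 < s) (ht : 0 < t) (hst : t < 1 - s) :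
    ‖(s:ℂ)^(u-1) * ((t:ℂ)^(v-1) * (((1-s) - t : ℝ):ℂ)^(w-1))‖
      = s^(u.re-1) * (t^(v.re-1) * ((1-s) - t)^(w.re-1)) := by
  rw [norm_mul, norm_mul,
    Complex.norm_cpow_eq_rpow_re_of_pos hs, Complex.norm_cpow_eq_rpow_re_of_pos ht,
    Complex.norm_cpow_eq_rpow_re_of_pos (by linarith : (0:ℝ) < (1-s) - t)]
  simp [Complex.sub_re, Complex.one_re]

lemma dirichlet_integrable {u v w : ℂ} (hu : 0 < u.re) (hv : 0 < v.re) (hw : 0 < w.re) :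
    IntegrableOn (dint u v w) openSimplex2 := by
  rw [← integrable_indicator_iff measurableSet_openSimplex2]
  have hmeas : AEStronglyMeasurable (openSimplex2.indicator (dint u v w)) volume :=
    (aestronglyMeasurable_indicator_iff measurableSet_openSimplex2).2
      ((continuousOn_dint u v w).aestronglyMeasurable measurableSet_openSimplex2)
  rw [Measure.volume_eq_prod] at hmeas ⊢
  refine (integrable_prod_iff hmeas).2 ⟨?_, ?_⟩
  · refine Filter.Eventually.of_forall (fun s => ?_)
    by_cases hs : s ∈ Ioo (0:ℝ) 1
    · rw [slice_eq u v w hs]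
      rw [integrable_indicator_iff measurableSet_Ioo]
      have h1s : (0:ℝ) < 1 - s := by have := hs.2; linarith
      exact ((cIntegrableOn_scaled hv hw h1s).const_mul _)
    · have : (fun t => openSimplex2.indicator (dint u v w) (s, t)) = fun _ => 0 :=
        funext (slice_zero u v w hs)
      rw [this]
      exact integrable_zero _ _ _
  · have key : (fun s => ∫ t, ‖openSimplex2.indicator (dint u v w) (s, t)‖)
        = (Ioo (0:ℝ) 1).indicator
            (fun s => (s^(u.re-1) * (1-s)^(v.re+w.re-1)) * Br v.re w.re) := by
      funext s
      by_cases hs : s ∈ Ioo (0:ℝ) 1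
      · rw [indicator_of_mem hs]
        have h1s : (0:ℝ) < 1 - s := by have := hs.2; linarith
        have e : (fun t => ‖openSimplex2.indicator (dint u v w) (s, t)‖)
            = (Ioo (0:ℝ) (1-s)).indicator
                (fun t => s^(u.re-1) * (t^(v.re-1) * ((1-s) - t)^(w.re-1))) := by
          funext t
          rw [show openSimplex2.indicator (dint u v w) (s, t)
              = (Ioo (0:ℝ) (1-s)).indicator
                (fun t => (s:ℂ)^(u-1) * ((t:ℂ)^(v-1) * (((1-s) - t : ℝ):ℂ)^(w-1))) t from
              congrFun (slice_eq u v w hs) t,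
            norm_indicator_eq_indicator_norm]
          by_cases ht : t ∈ Ioo (0:ℝ) (1-s)
          · rw [indicator_of_mem ht, indicator_of_mem ht]
            exact norm_dint_slice hs.1 ht.1 ht.2
          · rw [indicator_of_notMem ht, indicator_of_notMem ht]
        rw [e, integral_indicator measurableSet_Ioo, integral_const_mul,
          rIntegral_scaled hv hw h1s]
        ring
      · have e : (fun t => ‖openSimplex2.indicator (dint u v w) (s, t)‖) = fun _ => (0:ℝ) := by
          funext t; rw [slice_zero u v w hs t, norm_zero]
        rw [e, indicator_of_notMem hs, integral_zero]
    rw [key]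
    rw [integrable_indicator_iff measurableSet_Ioo]
    have base : IntegrableOn (fun s : ℝ => s^(u.re-1) * (1-s)^(v.re+w.re-1)) (Ioo 0 1) := by
      have := rIntegrableOn_scaled hu (by positivity : (0:ℝ) < v.re + w.re) one_pos
      exact this
    exact base.mul_const _

lemma betaIntegral_Ioo (u v : ℂ) :
    Complex.betaIntegral u v = ∫ s in Ioo (0:ℝ) 1, (s:ℂ)^(u-1) * (((1-s:ℝ)):ℂ)^(v-1) := by
  rw [Complex.betaIntegral, intervalIntegral.integral_of_le zero_le_one,
    integral_Ioc_eq_integral_Ioo]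
  exact setIntegral_congr_fun measurableSet_Ioo (fun s _ => by rw [ofReal_sub, ofReal_one])

lemma dirichlet_value {u v w : ℂ} (hu : 0 < u.re) (hv : 0 < v.re) (hw : 0 < w.re) :
    ∫ p in openSimplex2, dint u v w p
      = Complex.betaIntegral u (v+w) * Complex.betaIntegral v w := by
  have hInt := dirichlet_integrable hu hv hw
  have hIndInt : Integrable (openSimplex2.indicator (dint u v w)) volume :=
    (integrable_indicator_iff measurableSet_openSimplex2).2 hInt
  rw [← integral_indicator measurableSet_openSimplex2]
  rw [Measure.volume_eq_prod] at hIndInt ⊢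
  rw [integral_prod _ hIndInt]
  have outer : (fun s => ∫ t, openSimplex2.indicator (dint u v w) (s, t))
      = (Ioo (0:ℝ) 1).indicator
          (fun s => ((s:ℂ)^(u-1) * ((1-s:ℝ):ℂ)^((v+w)-1)) * Complex.betaIntegral v w) := by
    funext s
    by_cases hs : s ∈ Ioo (0:ℝ) 1
    · rw [indicator_of_mem hs]
      have h1s : (0:ℝ) < 1 - s := by have := hs.2; linarith
      rw [slice_eq u v w hs, integral_indicator measurableSet_Ioo, integral_const_mul,
        cIntegral_scaled hv hw h1s]
      ring
    · rw [indicator_of_notMem hs]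
      have e : (fun t => openSimplex2.indicator (dint u v w) (s, t)) = fun _ => (0:ℂ) :=
        funext (slice_zero u v w hs)
      rw [e, integral_zero]
  rw [outer, integral_indicator measurableSet_Ioo, integral_mul_const,
    ← betaIntegral_Ioo u (v+w)]

lemma betaIntegral_eq_Gamma {u v : ℂ} (hu : 0 < u.re) (hv : 0 < v.re) :
    Complex.betaIntegral u v = Complex.Gamma u * Complex.Gamma v / Complex.Gamma (u + v) := by
  have h := Complex.Gamma_mul_Gamma_eq_betaIntegral hu hv
  have hne : Complex.Gamma (u + v) ≠ 0 :=
    Complex.Gamma_ne_zero_of_re_pos (by rw [Complex.add_re]; positivity)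
  field_simp [h]
  rw [h]; ring

lemma dirichlet {u v w : ℂ} (hu : 0 < u.re) (hv : 0 < v.re) (hw : 0 < w.re) :
    ∫ p in openSimplex2, dint u v w p
      = Complex.Gamma u * Complex.Gamma v * Complex.Gamma w / Complex.Gamma (u+v+w) := by
  rw [dirichlet_value hu hv hw, betaIntegral_eq_Gamma hu (by rw [Complex.add_re]; positivity),
    betaIntegral_eq_Gamma hv hw]
  have h1 : Complex.Gamma (v + w) ≠ 0 :=
    Complex.Gamma_ne_zero_of_re_pos (by rw [Complex.add_re]; positivity)
  have h2 : Complex.Gamma (u + v + w) ≠ 0 :=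
    Complex.Gamma_ne_zero_of_re_pos (by rw [Complex.add_re, Complex.add_re]; positivity)
  have : u + (v + w) = u + v + w := by ring
  rw [this]
  field_simp

lemma dirichletR {a b c : ℝ} (ha : 0 < a) (hb : 0 < b) (hc : 0 < c) :
    IntegrableOn (fun p : ℝ × ℝ => p.1^(a-1) * p.2^(b-1) * (1-p.1-p.2)^(c-1)) openSimplex2 ∧
    ∫ p in openSimplex2, p.1^(a-1) * p.2^(b-1) * (1-p.1-p.2)^(c-1)
      = Real.Gamma a * Real.Gamma b * Real.Gamma c / Real.Gamma (a+b+c) := by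
  have ha' : (0:ℝ) < ((a:ℂ)).re := by simpa using ha
  have hb' : (0:ℝ) < ((b:ℂ)).re := by simpa using hb
  have hc' : (0:ℝ) < ((c:ℂ)).re := by simpa using hc
  have hcongr : ∀ p ∈ openSimplex2,
      ((p.1^(a-1) * p.2^(b-1) * (1-p.1-p.2)^(c-1) : ℝ) : ℂ) = dint (a:ℂ) (b:ℂ) (c:ℂ) p := by
    rintro ⟨s, t⟩ ⟨h1, h2, h3⟩
    simp only [dint]
    rw [ofReal_mul, ofReal_mul, Complex.ofReal_cpow h1.le, Complex.ofReal_cpow h2.le,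
      Complex.ofReal_cpow (by simp only at h1 h2 h3 ⊢; linarith : (0:ℝ) ≤ 1 - s - t)]
    push_cast
    ring
  constructor
  · have h2 : IntegrableOn
        (fun p : ℝ × ℝ => ((p.1^(a-1) * p.2^(b-1) * (1-p.1-p.2)^(c-1) : ℝ) : ℂ)) openSimplex2 :=
      (dirichlet_integrable ha' hb' hc').congr_fun
        (fun p hp => (hcongr p hp).symm) measurableSet_openSimplex2
    have h3 := h2.re
    simpa [RCLike.re_to_complex, IntegrableOn] using h3
  · apply Complex.ofReal_injective
    calc ((∫ p in openSimplex2, p.1^(a-1) * p.2^(b-1) * (1-p.1-p.2)^(c-1) : ℝ) : ℂ)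
        = ∫ p in openSimplex2, ((p.1^(a-1) * p.2^(b-1) * (1-p.1-p.2)^(c-1) : ℝ) : ℂ) :=
          integral_ofReal.symm
    _ = ∫ p in openSimplex2, dint (a:ℂ) (b:ℂ) (c:ℂ) p :=
          setIntegral_congr_fun measurableSet_openSimplex2 hcongr
    _ = Complex.Gamma (a:ℂ) * Complex.Gamma (b:ℂ) * Complex.Gamma (c:ℂ)
          / Complex.Gamma ((a:ℂ)+(b:ℂ)+(c:ℂ)) := dirichlet ha' hb' hc'
    _ = ((Real.Gamma a * Real.Gamma b * Real.Gamma c / Real.Gamma (a+b+c) : ℝ) : ℂ) := by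
          rw [show ((a:ℂ)+(b:ℂ)+(c:ℂ)) = ((a+b+c : ℝ) : ℂ) by push_cast; ring]
          rw [Complex.Gamma_ofReal, Complex.Gamma_ofReal, Complex.Gamma_ofReal,
            Complex.Gamma_ofReal]
          push_cast
          ring

lemma norm_dint {u v w : ℂ} {p : ℝ × ℝ} (hp : p ∈ openSimplex2) :
    ‖dint u v w p‖ = p.1^(u.re-1) * p.2^(v.re-1) * (1-p.1-p.2)^(w.re-1) := by
  obtain ⟨h1, h2, h3⟩ := hp
  have h4 : (0:ℝ) < 1 - p.1 - p.2 := by linarith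
  rw [dint, norm_mul, norm_mul,
    Complex.norm_cpow_eq_rpow_re_of_pos h1, Complex.norm_cpow_eq_rpow_re_of_pos h2,
    Complex.norm_cpow_eq_rpow_re_of_pos h4]
  simp [Complex.sub_re, Complex.one_re]

lemma summable_norm_exp_series (z : ℂ) : Summable (fun m : ℕ => ‖z^m / (m.factorial : ℂ)‖) := by
  have e : (fun m : ℕ => ‖z^m / (m.factorial : ℂ)‖)
      = fun m : ℕ => ‖z‖^m / (m.factorial : ℝ) := by
    funext m
    rw [norm_div, norm_pow, Complex.norm_natCast]
  rw [e]
  exact Real.summable_pow_div_factorial _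

lemma exp_tsum (z : ℂ) : Complex.exp z = ∑' n : ℕ, z^n / (n.factorial : ℂ) := by
  rw [Complex.exp_eq_exp_ℂ, NormedSpace.exp_eq_tsum_div]

end Phi2Aux

open Phi2Aux

theorem stmt8 (β β' γ : ℂ) (hβ : 0 < β.re) (hβ' : 0 < β'.re)
    (hγ : 0 < (γ - β - β').re) (x y : ℂ) :
    Summable (fun p : ℕ × ℕ =>
      ‖poch β p.1 * poch β' p.2 /
          (poch γ (p.1 + p.2) * (Nat.factorial p.1 : ℂ) * (Nat.factorial p.2 : ℂ)) *
          x ^ p.1 * y ^ p.2‖) ∧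
    IntegrableOn
      (fun p : ℝ × ℝ =>
        (p.1 : ℂ) ^ (β - 1) * (p.2 : ℂ) ^ (β' - 1) *
          ((1 - p.1 - p.2 : ℝ) : ℂ) ^ (γ - β - β' - 1) *
          Complex.exp ((p.1 : ℂ) * x + (p.2 : ℂ) * y))
      openSimplex2 ∧
    (∑' p : ℕ × ℕ,
        poch β p.1 * poch β' p.2 /
          (poch γ (p.1 + p.2) * (Nat.factorial p.1 : ℂ) * (Nat.factorial p.2 : ℂ)) *
          x ^ p.1 * y ^ p.2)
      = Complex.Gamma γ /
          (Complex.Gamma β * Complex.Gamma β' * Complex.Gamma (γ - β - β')) *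
          ∫ p in openSimplex2,
            (p.1 : ℂ) ^ (β - 1) * (p.2 : ℂ) ^ (β' - 1) *
              ((1 - p.1 - p.2 : ℝ) : ℂ) ^ (γ - β - β' - 1) *
              Complex.exp ((p.1 : ℂ) * x + (p.2 : ℂ) * y) := by
  have hγre : 0 < γ.re := by
    have h := hγ
    rw [Complex.sub_re, Complex.sub_re] at h
    linarith
  set w : ℂ := γ - β - β' with hw_def
  have hw : 0 < w.re := hγ
  -- Part 1 : summability
  have part1 : Summable (fun p : ℕ × ℕ =>
      ‖poch β p.1 * poch β' p.2 /
          (poch γ (p.1 + p.2) * (Nat.factorial p.1 : ℂ) * (Nat.factorial p.2 : ℂ)) *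
          x ^ p.1 * y ^ p.2‖) := by
    refine Summable.of_nonneg_of_le (fun p => norm_nonneg _) (fun p => ?_)
      (summable_master (norm_nonneg β) (norm_nonneg β') hγre
        (norm_nonneg x) (norm_nonneg y))
    obtain ⟨m, n⟩ := p
    simp only
    simp only [norm_mul, norm_div, norm_pow, Complex.norm_natCast]
    have hden_pos : (0:ℝ) < pochR γ.re (m+n) * m.factorial * n.factorial := by
      have := pochR_pos hγre (m+n)
      have h1 : (0:ℝ) < m.factorial := by exact_mod_cast m.factorial_pos
      have h2 : (0:ℝ) < n.factorial := by exact_mod_cast n.factorial_pos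
      positivity
    have hden_le : pochR γ.re (m+n) * m.factorial * n.factorial
        ≤ ‖poch γ (m+n)‖ * m.factorial * n.factorial := by
      have := pochR_re_le_norm_poch hγre.le (m+n)
      have h1 : (0:ℝ) ≤ m.factorial := by positivity
      have h2 : (0:ℝ) ≤ n.factorial := by positivity
      gcongr
    have hnum_le : ‖poch β m‖ * ‖poch β' n‖
        ≤ pochR ‖β‖ m * pochR ‖β'‖ n :=
      mul_le_mul (norm_poch_le β m) (norm_poch_le β' n) (norm_nonneg _)
        (le_trans (norm_nonneg _) (norm_poch_le β m))
    refine mul_le_mul_of_nonneg_right (mul_le_mul_of_nonneg_right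
      (div_le_div₀ (mul_nonneg (pochR_nonneg (norm_nonneg β) m)
        (pochR_nonneg (norm_nonneg β') n)) hnum_le hden_pos hden_le)
      (pow_nonneg (norm_nonneg x) m)) (pow_nonneg (norm_nonneg y) n)
  -- Part 2 : integrability
  have hTcont : ContinuousOn (fun p : ℝ × ℝ =>
      dint β β' w p * Complex.exp ((p.1 : ℂ) * x + (p.2 : ℂ) * y)) openSimplex2 := by
    refine (continuousOn_dint β β' w).mul (Continuous.continuousOn ?_)
    refine Complex.continuous_exp.comp ?_
    exact (((Complex.continuous_ofReal.comp continuous_fst).mul continuous_const).add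
      ((Complex.continuous_ofReal.comp continuous_snd).mul continuous_const))
  have part2 : IntegrableOn
      (fun p : ℝ × ℝ => dint β β' w p * Complex.exp ((p.1 : ℂ) * x + (p.2 : ℂ) * y))
      openSimplex2 := by
    refine Integrable.mono'
      (((dirichlet_integrable hβ hβ' hw).norm).const_mul (Real.exp (‖x‖ + ‖y‖)))
      (hTcont.aestronglyMeasurable measurableSet_openSimplex2) ?_
    refine (ae_restrict_mem measurableSet_openSimplex2).mono (fun p hp => ?_)
    obtain ⟨h1, h2, h3⟩ := hp
    rw [norm_mul]
    have hbound : ‖Complex.exp ((p.1 : ℂ) * x + (p.2 : ℂ) * y)‖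
        ≤ Real.exp (‖x‖ + ‖y‖) := by
      rw [Complex.norm_exp]
      apply Real.exp_le_exp.2
      have hre : ((p.1 : ℂ) * x + (p.2 : ℂ) * y).re = p.1 * x.re + p.2 * y.re := by
        simp [Complex.add_re, Complex.mul_re]
      rw [hre]
      have hx1 : x.re ≤ ‖x‖ := Complex.re_le_norm x
      have hy1 : y.re ≤ ‖y‖ := Complex.re_le_norm y
      have hp1 : p.1 ≤ 1 := by linarith
      have hp2 : p.2 ≤ 1 := by linarith
      have e1 : p.1 * x.re ≤ ‖x‖ := by nlinarith [norm_nonneg x]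
      have e2 : p.2 * y.re ≤ ‖y‖ := by nlinarith [norm_nonneg y]
      linarith
    calc ‖dint β β' w p‖ * ‖Complex.exp ((p.1 : ℂ) * x + (p.2 : ℂ) * y)‖
        ≤ ‖dint β β' w p‖ * Real.exp (‖x‖ + ‖y‖) := by
          exact mul_le_mul_of_nonneg_left hbound (norm_nonneg _)
    _ = Real.exp (‖x‖ + ‖y‖) * ‖dint β β' w p‖ := by ring
  -- Part 3 : the identity
  refine ⟨part1, part2, ?_⟩
  set f : ℕ × ℕ → ℝ × ℝ → ℂ := fun q p =>
    dint β β' w p * ((↑p.1 * x) ^ q.1 / (q.1.factorial : ℂ) *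
      ((↑p.2 * y) ^ q.2 / (q.2.factorial : ℂ))) with hf_def
  have hfmeas : ∀ q : ℕ × ℕ, AEStronglyMeasurable (f q) (volume.restrict openSimplex2) := by
    intro q
    refine ContinuousOn.aestronglyMeasurable ?_ measurableSet_openSimplex2
    refine (continuousOn_dint β β' w).mul (Continuous.continuousOn ?_)
    exact ((((Complex.continuous_ofReal.comp continuous_fst).mul continuous_const).pow
      q.1).div_const _).mul
      ((((Complex.continuous_ofReal.comp continuous_snd).mul continuous_const).pow
      q.2).div_const _)
  have hre1 : ∀ m : ℕ, 0 < (β + (m:ℕ)).re := by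
    intro m
    rw [Complex.add_re, Complex.natCast_re]
    have : (0:ℝ) ≤ m := Nat.cast_nonneg m
    linarith
  have hre2 : ∀ n : ℕ, 0 < (β' + (n:ℕ)).re := by
    intro n
    rw [Complex.add_re, Complex.natCast_re]
    have : (0:ℝ) ≤ n := Nat.cast_nonneg n
    linarith
  have hfcongr : ∀ q : ℕ × ℕ, ∀ p ∈ openSimplex2,
      f q p = (x ^ q.1 * y ^ q.2 / ((q.1.factorial : ℂ) * (q.2.factorial : ℂ))) *
        dint (β + q.1) (β' + q.2) w p := by
    rintro ⟨m, n⟩ ⟨s, t⟩ ⟨h1, h2, h3⟩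
    have hs : ((s:ℝ):ℂ) ≠ 0 := Complex.ofReal_ne_zero.2 h1.ne'
    have ht : ((t:ℝ):ℂ) ≠ 0 := Complex.ofReal_ne_zero.2 h2.ne'
    simp only [hf_def, dint]
    rw [show β + (m:ℕ) - 1 = (β - 1) + (m:ℕ) by ring,
      show β' + (n:ℕ) - 1 = (β' - 1) + (n:ℕ) by ring,
      Complex.cpow_add _ _ hs, Complex.cpow_add _ _ ht,
      Complex.cpow_natCast, Complex.cpow_natCast, mul_pow, mul_pow]
    ring
  have hfint : ∀ q : ℕ × ℕ, Integrable (f q) (volume.restrict openSimplex2) := by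
    intro q
    have h := ((dirichlet_integrable (hre1 q.1) (hre2 q.2) hw).const_mul
      (x ^ q.1 * y ^ q.2 / ((q.1.factorial : ℂ) * (q.2.factorial : ℂ))))
    exact IntegrableOn.congr_fun h (fun p hp => (hfcongr q p hp).symm) measurableSet_openSimplex2
  have hIval : ∀ q : ℕ × ℕ, (∫ p in openSimplex2, f q p)
      = x ^ q.1 * y ^ q.2 / ((q.1.factorial : ℂ) * (q.2.factorial : ℂ)) *
        (Complex.Gamma (β + q.1) * Complex.Gamma (β' + q.2) * Complex.Gamma w /
          Complex.Gamma (γ + ((q.1 + q.2 : ℕ) : ℂ))) := by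
    intro q
    calc (∫ p in openSimplex2, f q p)
        = ∫ p in openSimplex2, (x ^ q.1 * y ^ q.2 /
            ((q.1.factorial : ℂ) * (q.2.factorial : ℂ))) * dint (β + q.1) (β' + q.2) w p :=
          setIntegral_congr_fun measurableSet_openSimplex2 (hfcongr q)
    _ = (x ^ q.1 * y ^ q.2 / ((q.1.factorial : ℂ) * (q.2.factorial : ℂ))) *
          ∫ p in openSimplex2, dint (β + q.1) (β' + q.2) w p := integral_const_mul _ _
    _ = _ := by
          rw [dirichlet (hre1 q.1) (hre2 q.2) hw,
            show β + (q.1:ℕ) + (β' + (q.2:ℕ)) + w = γ + ((q.1 + q.2 : ℕ) : ℂ) by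
              rw [hw_def]; push_cast; ring]
  have ha : 0 < β.re := hβ
  have hb : 0 < β'.re := hβ'
  have habc : 0 < β.re + β'.re + w.re := by positivity
  have hnval : ∀ q : ℕ × ℕ, (∫ p in openSimplex2, ‖f q p‖)
      = ‖x‖ ^ q.1 * ‖y‖ ^ q.2 / ((q.1.factorial : ℝ) * (q.2.factorial : ℝ)) *
        (Real.Gamma (β.re + q.1) * Real.Gamma (β'.re + q.2) * Real.Gamma w.re /
          Real.Gamma (β.re + β'.re + w.re + ((q.1 + q.2 : ℕ) : ℝ))) := by
    intro q
    have hposm : (0:ℝ) < β.re + q.1 := by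
      have : (0:ℝ) ≤ q.1 := Nat.cast_nonneg _
      linarith
    have hposn : (0:ℝ) < β'.re + q.2 := by
      have : (0:ℝ) ≤ q.2 := Nat.cast_nonneg _
      linarith
    have hcongrN : ∀ p ∈ openSimplex2, ‖f q p‖
        = (‖x‖ ^ q.1 * ‖y‖ ^ q.2 / ((q.1.factorial : ℝ) * (q.2.factorial : ℝ))) *
          (p.1 ^ ((β.re + q.1) - 1) * p.2 ^ ((β'.re + q.2) - 1) *
            (1 - p.1 - p.2) ^ (w.re - 1)) := by
      rintro ⟨s, t⟩ ⟨h1, h2, h3⟩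
      simp only [hf_def, norm_mul, norm_div, norm_pow, Complex.norm_natCast, mul_pow,
        Complex.norm_real, Real.norm_eq_abs]
      rw [abs_of_pos h1, abs_of_pos h2, norm_dint (⟨h1, h2, h3⟩ : (s,t) ∈ openSimplex2)]
      rw [show ((β.re + (q.1:ℕ)) - 1 : ℝ) = (β.re - 1) + (q.1:ℕ) by ring,
        show ((β'.re + (q.2:ℕ)) - 1 : ℝ) = (β'.re - 1) + (q.2:ℕ) by ring,
        Real.rpow_add h1, Real.rpow_add h2, Real.rpow_natCast, Real.rpow_natCast]
      ring
    calc (∫ p in openSimplex2, ‖f q p‖)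
        = ∫ p in openSimplex2, (‖x‖ ^ q.1 * ‖y‖ ^ q.2 /
            ((q.1.factorial : ℝ) * (q.2.factorial : ℝ))) *
          (p.1 ^ ((β.re + q.1) - 1) * p.2 ^ ((β'.re + q.2) - 1) *
            (1 - p.1 - p.2) ^ (w.re - 1)) :=
          setIntegral_congr_fun measurableSet_openSimplex2 hcongrN
    _ = (‖x‖ ^ q.1 * ‖y‖ ^ q.2 / ((q.1.factorial : ℝ) * (q.2.factorial : ℝ))) *
          ∫ p in openSimplex2, p.1 ^ ((β.re + q.1) - 1) * p.2 ^ ((β'.re + q.2) - 1) *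
            (1 - p.1 - p.2) ^ (w.re - 1) := integral_const_mul _ _
    _ = _ := by
          rw [(dirichletR hposm hposn hw).2,
            show β.re + (q.1:ℕ) + (β'.re + (q.2:ℕ)) + w.re
              = β.re + β'.re + w.re + ((q.1 + q.2 : ℕ) : ℝ) by push_cast; ring]
  have hsummable_norm : Summable (fun q : ℕ × ℕ => ∫ p in openSimplex2, ‖f q p‖) := by
    have C := Real.Gamma β.re * Real.Gamma β'.re * Real.Gamma w.re / Real.Gamma (β.re + β'.re + w.re)
    refine ((summable_master ha.le hb.le habc (norm_nonneg x) (norm_nonneg y)).mul_left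
      (Real.Gamma β.re * Real.Gamma β'.re * Real.Gamma w.re /
        Real.Gamma (β.re + β'.re + w.re))).congr (fun q => ?_)
    rw [hnval q, GammaR_add_nat ha q.1, GammaR_add_nat hb q.2, GammaR_add_nat habc (q.1 + q.2)]
    have h1 : Real.Gamma (β.re + β'.re + w.re) ≠ 0 := (Real.Gamma_pos_of_pos habc).ne'
    have h2 : pochR (β.re + β'.re + w.re) (q.1 + q.2) ≠ 0 := (pochR_pos habc _).ne'
    have h3 : (q.1.factorial : ℝ) ≠ 0 := by positivity
    have h4 : (q.2.factorial : ℝ) ≠ 0 := by positivity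
    field_simp
  have hlint : ∑' q : ℕ × ℕ, ∫⁻ p, ‖f q p‖₊ ∂(volume.restrict openSimplex2) ≠ ⊤ := by
    have e : ∀ q : ℕ × ℕ, ∫⁻ p, ‖f q p‖₊ ∂(volume.restrict openSimplex2)
        = ENNReal.ofReal (∫ p in openSimplex2, ‖f q p‖) :=
      fun q => (ofReal_integral_norm_eq_lintegral_enorm (hfint q)).symm
    rw [tsum_congr e, ← ENNReal.ofReal_tsum_of_nonneg
      (fun q => integral_nonneg (fun p => norm_nonneg _)) hsummable_norm]
    exact ENNReal.ofReal_ne_top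
  have hae : ∀ᵐ p ∂(volume.restrict openSimplex2),
      (∑' q : ℕ × ℕ, f q p)
        = dint β β' w p * Complex.exp ((p.1:ℂ) * x + (p.2:ℂ) * y) := by
    refine (ae_restrict_mem measurableSet_openSimplex2).mono (fun p _ => ?_)
    simp only [hf_def]
    rw [tsum_mul_left, ← tsum_mul_tsum_of_summable_norm
      (summable_norm_exp_series ((p.1:ℂ) * x)) (summable_norm_exp_series ((p.2:ℂ) * y)),
      ← exp_tsum, ← exp_tsum, ← Complex.exp_add]
  have hγne : Complex.Gamma γ ≠ 0 := Complex.Gamma_ne_zero_of_re_pos hγre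
  have hβne : Complex.Gamma β ≠ 0 := Complex.Gamma_ne_zero_of_re_pos hβ
  have hβ'ne : Complex.Gamma β' ≠ 0 := Complex.Gamma_ne_zero_of_re_pos hβ'
  have hwne : Complex.Gamma w ≠ 0 := Complex.Gamma_ne_zero_of_re_pos hw
  have hterm : ∀ q : ℕ × ℕ,
      poch β q.1 * poch β' q.2 /
          (poch γ (q.1 + q.2) * (Nat.factorial q.1 : ℂ) * (Nat.factorial q.2 : ℂ)) *
          x ^ q.1 * y ^ q.2
        = Complex.Gamma γ / (Complex.Gamma β * Complex.Gamma β' * Complex.Gamma w) *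
          ∫ p in openSimplex2, f q p := by
    intro q
    rw [hIval q, Gamma_add_nat hβ q.1, Gamma_add_nat hβ' q.2, Gamma_add_nat hγre (q.1 + q.2)]
    have h2 : poch γ (q.1 + q.2) ≠ 0 := poch_ne_zero hγre _
    have h3 : (q.1.factorial : ℂ) ≠ 0 := Nat.cast_ne_zero.2 q.1.factorial_ne_zero
    have h4 : (q.2.factorial : ℂ) ≠ 0 := Nat.cast_ne_zero.2 q.2.factorial_ne_zero
    field_simp
  calc (∑' q : ℕ × ℕ,
        poch β q.1 * poch β' q.2 /
          (poch γ (q.1 + q.2) * (Nat.factorial q.1 : ℂ) * (Nat.factorial q.2 : ℂ)) *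
          x ^ q.1 * y ^ q.2)
      = ∑' q : ℕ × ℕ, Complex.Gamma γ /
          (Complex.Gamma β * Complex.Gamma β' * Complex.Gamma w) * ∫ p in openSimplex2, f q p :=
        tsum_congr hterm
  _ = Complex.Gamma γ / (Complex.Gamma β * Complex.Gamma β' * Complex.Gamma w) *
        ∑' q : ℕ × ℕ, ∫ p in openSimplex2, f q p := tsum_mul_left
  _ = Complex.Gamma γ / (Complex.Gamma β * Complex.Gamma β' * Complex.Gamma w) *
        ∫ p in openSimplex2, ∑' q : ℕ × ℕ, f q p := by
      rw [integral_tsum hfmeas hlint]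
  _ = _ := by
      rw [integral_congr_ae hae]
      rfl
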